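/- Let (G,<,z) be a left-ordered group with central, positive, cofinal element z, and let g ∈ G. Then the circular ordering on G/⟨z⟩ induced by the conjugate ordering <^g (defined by a <^g b iff ag < bg) equals the conjugate by g⟨z⟩ of the circular ordering induced by <; that is, c_{<^g} = (c_<)^{g⟨z⟩}, where c^{h}(x₁,x₂,x₃) := c(x₁h, x₂h, x₃h). -/

import Mathlib

open scoped Classical

noncomputable section

set_option linter.unusedSectionVars false
namespace Stmt10Aux

variable {G : Type*} [Group G] {lt : G → G → Prop} {z : G}

theorem ltt (hsto : IsStrictTotalOrder G lt) {a b c : G}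
    (h1 : lt a b) (h2 : lt b c) : lt a c :=
  hsto.toIsStrictOrder.toIsTrans.trans a b c h1 h2
theorem lirr (hsto : IsStrictTotalOrder G lt) (a : G) : ¬ lt a a :=
  hsto.toIsStrictOrder.toIrrefl.irrefl a
theorem lasym (hsto : IsStrictTotalOrder G lt) {a b : G} (h : lt a b) : ¬ lt b a :=
  fun h' => lirr hsto a (ltt hsto h h')
theorem ltle (hsto : IsStrictTotalOrder G lt) {a b c : G}
    (h1 : lt a b) (h2 : ¬ lt c b) : lt a c := by
  rcases (Std.Trichotomous.rel_or_eq_or_rel_swap (i := hsto.toTrichotomous) (a := b) (b := c)) with h | rfl | h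
  · exact ltt hsto h1 h
  · exact h1
  · exact absurd h h2
theorem llet (hsto : IsStrictTotalOrder G lt) {a b c : G}
    (h1 : ¬ lt b a) (h2 : lt b c) : lt a c := by
  rcases (Std.Trichotomous.rel_or_eq_or_rel_swap (i := hsto.toTrichotomous) (a := a) (b := b)) with h | rfl | h
  · exact ltt hsto h h2
  · exact h2
  · exact absurd h h1
theorem zcomm (hzc : ∀ x : G, z * x = x * z) (k : ℤ) (x : G) :
    x * z ^ k = z ^ k * x :=
  ((show Commute z x from hzc x).zpow_left k).eq.symm
theorem cancel_l (hsto : IsStrictTotalOrder G lt)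
    (hinv : ∀ f a b : G, lt a b → lt (f * a) (f * b)) {f a b : G}
    (h : lt (f * a) (f * b)) : lt a b := by
  rcases (Std.Trichotomous.rel_or_eq_or_rel_swap (i := hsto.toTrichotomous) (a := a) (b := b)) with h' | rfl | h'
  · exact h'
  · exact absurd h (lirr hsto _)
  · exact absurd h (lasym hsto (hinv f _ _ h'))
theorem mono_r (hinv : ∀ f a b : G, lt a b → lt (f * a) (f * b))
    (hzc : ∀ x : G, z * x = x * z) {a b : G} (k : ℤ)
    (h : lt a b) : lt (a * z ^ k) (b * z ^ k) := by
  rw [zcomm hzc, zcomm hzc]; exact hinv _ _ _ h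
theorem cancel_r (hsto : IsStrictTotalOrder G lt)
    (hinv : ∀ f a b : G, lt a b → lt (f * a) (f * b))
    (hzc : ∀ x : G, z * x = x * z) {a b : G} (k : ℤ)
    (h : lt (a * z ^ k) (b * z ^ k)) : lt a b := by
  rw [zcomm hzc, zcomm hzc] at h; exact cancel_l hsto hinv h
theorem one_lt_zpow (hsto : IsStrictTotalOrder G lt)
    (hinv : ∀ f a b : G, lt a b → lt (f * a) (f * b))
    (hzpos : lt 1 z) {k : ℤ} (hk : 0 < k) : lt 1 (z ^ k) := by
  have hn : ∀ n : ℕ, lt 1 (z ^ (n + 1)) := by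
    intro n
    induction n with
    | zero => simpa using hzpos
    | succ n ih =>
      have h2 : lt z (z * z ^ (n + 1)) := by simpa using hinv z 1 (z ^ (n + 1)) ih
      have h3 := ltt hsto hzpos h2
      rwa [← pow_succ'] at h3
  have he : z ^ k = z ^ ((k.toNat - 1) + 1 : ℕ) := by
    rw [← zpow_natCast]; congr 1; omega
  rw [he]; exact hn _
theorem zpow_lt (hsto : IsStrictTotalOrder G lt)
    (hinv : ∀ f a b : G, lt a b → lt (f * a) (f * b))
    (hzpos : lt 1 z) {j k : ℤ} (hjk : j < k) : lt (z ^ j) (z ^ k) := by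
  have h := hinv (z ^ j) 1 (z ^ (k - j)) (one_lt_zpow hsto hinv hzpos (by omega))
  rwa [mul_one, ← zpow_add, add_sub_cancel] at h
theorem mul_zpow_lt (hsto : IsStrictTotalOrder G lt)
    (hinv : ∀ f a b : G, lt a b → lt (f * a) (f * b))
    (hzpos : lt 1 z) (a : G) {j k : ℤ} (hjk : j < k) :
    lt (a * z ^ j) (a * z ^ k) :=
  hinv a _ _ (zpow_lt hsto hinv hzpos hjk)
theorem mul_zpow_le (hsto : IsStrictTotalOrder G lt)
    (hinv : ∀ f a b : G, lt a b → lt (f * a) (f * b))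
    (hzpos : lt 1 z) (a : G) {j k : ℤ} (hjk : j ≤ k) :
    ¬ lt (a * z ^ k) (a * z ^ j) := by
  rcases eq_or_lt_of_le hjk with rfl | h
  · exact lirr hsto _
  · exact lasym hsto (mul_zpow_lt hsto hinv hzpos a h)

/-- collapse `(x * z^i) * z^j` -/
theorem zjoin (x : G) (i j : ℤ) : (x * z ^ i) * z ^ j = x * z ^ (i + j) := by
  rw [mul_assoc, ← zpow_add]

theorem zleft (hzc : ∀ x : G, z * x = x * z) (x : G) (i : ℤ) :
    z * (x * z ^ i) = x * z ^ (i + 1) := by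
  rw [← mul_assoc, hzc, mul_assoc, ← zpow_one_add, add_comm]

theorem shiftk (hsto : IsStrictTotalOrder G lt)
    (hinv : ∀ f a b : G, lt a b → lt (f * a) (f * b))
    (hzc : ∀ x : G, z * x = x * z) (hzpos : lt 1 z)
    {v q p : G} {k : ℤ}
    (hq1 : ¬ lt q v) (hp1 : ¬ lt p v) (hq2 : lt q (v * z ^ (1 : ℤ)))
    (hp2 : lt p (v * z ^ (2 : ℤ))) (hpq : p = q * z ^ k) : 0 ≤ k ∧ k ≤ 1 := by
  constructor
  · by_contra h
    push_neg at h
    have h1 : lt p ((v * z ^ (1 : ℤ)) * z ^ k) := hpq ▸ mono_r hinv hzc k hq2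
    rw [zjoin] at h1
    have h2 : ¬ lt (v * z ^ (0 : ℤ)) (v * z ^ (1 + k)) :=
      mul_zpow_le hsto hinv hzpos v (by omega)
    rw [zpow_zero, mul_one] at h2
    exact hp1 (ltle hsto h1 h2)
  · by_contra h
    push_neg at h
    have h1 : ¬ lt p (v * z ^ k) := by
      rw [hpq]
      intro hc
      exact hq1 (cancel_r hsto hinv hzc k hc)
    have h2 : lt (v * z ^ k) (v * z ^ (2 : ℤ)) := llet hsto h1 hp2
    exact mul_zpow_le hsto hinv hzpos v (by omega : (2:ℤ) ≤ k) h2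

theorem pairk (hsto : IsStrictTotalOrder G lt)
    (hinv : ∀ f a b : G, lt a b → lt (f * a) (f * b))
    (hzc : ∀ x : G, z * x = x * z) (hzpos : lt 1 z)
    {u v x x' y y' : G} {j j' : ℤ}
    (hx1 : ¬ lt x u) (hx'2 : lt x' (z * u))
    (hy1 : ¬ lt y v) (hy2 : lt y (z * v))
    (hy'1 : ¬ lt y' v) (hy'2 : lt y' (z * v))
    (hxy : y = x * z ^ j) (hxy' : y' = x' * z ^ j')
    (hlt : lt x x') :
    (j' = j ∧ lt y y') ∨ (j' = j - 1 ∧ lt y' y) := by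
  -- x' < z * x
  have hzu : ¬ lt (z * x) (z * u) := fun hc => hx1 (cancel_l hsto hinv hc)
  have hx'zx : lt x' (z * x) := ltle hsto hx'2 hzu
  -- p := x' * z^j
  have hyp : lt y (x' * z ^ j) := hxy ▸ mono_r hinv hzc j hlt
  have hp1 : ¬ lt (x' * z ^ j) v := fun hc => hy1 (ltt hsto hyp hc)
  have hvz : ∀ w : G, z * w = w * z ^ (1 : ℤ) := fun w => by rw [zpow_one, hzc]
  have hpzy : lt (x' * z ^ j) (y * z ^ (1 : ℤ)) := by
    have h := mono_r hinv hzc (k := j) hx'zx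
    rw [mul_assoc, zleft hzc] at h
    have hy1' : y * z ^ (1 : ℤ) = x * z ^ (j + 1) := by rw [hxy, zjoin]
    rw [hy1']; exact h
  have hy2' : lt y (v * z ^ (1 : ℤ)) := by rwa [hvz] at hy2
  have hy'2' : lt y' (v * z ^ (1 : ℤ)) := by rwa [hvz] at hy'2
  have hp2' : lt (x' * z ^ j) (v * z ^ (2 : ℤ)) := by
    have h := mono_r hinv hzc (k := (1:ℤ)) hy2'
    rw [zjoin, show (1+1:ℤ) = 2 from rfl] at h
    exact ltt hsto hpzy h
  have hpq : x' * z ^ j = y' * z ^ (j - j') := by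
    rw [hxy', zjoin, show j' + (j - j') = j from by omega]
  obtain ⟨h0, h1⟩ := shiftk hsto hinv hzc hzpos hy'1 hp1 hy'2' hp2' hpq
  by_cases hjj : j' = j
  · exact Or.inl ⟨hjj, by rw [hxy, hxy', hjj]; exact mono_r hinv hzc j hlt⟩
  · have hjj' : j' = j - 1 := by omega
    refine Or.inr ⟨hjj', ?_⟩
    have h := mono_r hinv hzc (k := j - 1) hx'zx
    rw [mul_assoc, zleft hzc] at h
    have hj : j - 1 + 1 = j := by omega
    rw [hj] at h
    rw [hxy, hxy', hjj']
    exact h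


theorem sortedB (hsto : IsStrictTotalOrder G lt)
    (hinv : ∀ f a b : G, lt a b → lt (f * a) (f * b))
    (hzc : ∀ x : G, z * x = x * z) (hzpos : lt 1 z)
    {u v x₁ x₂ x₃ y₁ y₂ y₃ : G} {k₁ k₂ k₃ : ℤ}
    (hx11 : ¬ lt x₁ u) (hx12 : lt x₁ (z * u))
    (hx21 : ¬ lt x₂ u) (hx22 : lt x₂ (z * u))
    (hx31 : ¬ lt x₃ u) (hx32 : lt x₃ (z * u))
    (hy11 : ¬ lt y₁ v) (hy12 : lt y₁ (z * v))
    (hy21 : ¬ lt y₂ v) (hy22 : lt y₂ (z * v))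
    (hy31 : ¬ lt y₃ v) (hy32 : lt y₃ (z * v))
    (hs1 : y₁ = x₁ * z ^ k₁) (hs2 : y₂ = x₂ * z ^ k₂) (hs3 : y₃ = x₃ * z ^ k₃)
    (h12 : lt x₁ x₂) (h23 : lt x₂ x₃) :
    (lt y₁ y₂ ∧ lt y₂ y₃) ∨ (lt y₂ y₃ ∧ lt y₃ y₁) ∨ (lt y₃ y₁ ∧ lt y₁ y₂) := by
  have h13 := ltt hsto h12 h23
  have P12 := pairk hsto hinv hzc hzpos hx11 hx22 hy11 hy12 hy21 hy22 hs1 hs2 h12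
  have P23 := pairk hsto hinv hzc hzpos hx21 hx32 hy21 hy22 hy31 hy32 hs2 hs3 h23
  have P13 := pairk hsto hinv hzc hzpos hx11 hx32 hy11 hy12 hy31 hy32 hs1 hs3 h13
  rcases P12 with ⟨e, h⟩ | ⟨e, h⟩ <;> rcases P23 with ⟨e', h'⟩ | ⟨e', h'⟩ <;>
    rcases P13 with ⟨e'', h''⟩ | ⟨e'', h''⟩ <;> first | omega | tauto

theorem Bimp (hsto : IsStrictTotalOrder G lt)
    (hinv : ∀ f a b : G, lt a b → lt (f * a) (f * b))
    (hzc : ∀ x : G, z * x = x * z) (hzpos : lt 1 z)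
    {u v x₁ x₂ x₃ y₁ y₂ y₃ : G} {k₁ k₂ k₃ : ℤ}
    (hx11 : ¬ lt x₁ u) (hx12 : lt x₁ (z * u))
    (hx21 : ¬ lt x₂ u) (hx22 : lt x₂ (z * u))
    (hx31 : ¬ lt x₃ u) (hx32 : lt x₃ (z * u))
    (hy11 : ¬ lt y₁ v) (hy12 : lt y₁ (z * v))
    (hy21 : ¬ lt y₂ v) (hy22 : lt y₂ (z * v))
    (hy31 : ¬ lt y₃ v) (hy32 : lt y₃ (z * v))
    (hs1 : y₁ = x₁ * z ^ k₁) (hs2 : y₂ = x₂ * z ^ k₂) (hs3 : y₃ = x₃ * z ^ k₃)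
    (hB : (lt x₁ x₂ ∧ lt x₂ x₃) ∨ (lt x₂ x₃ ∧ lt x₃ x₁) ∨ (lt x₃ x₁ ∧ lt x₁ x₂)) :
    (lt y₁ y₂ ∧ lt y₂ y₃) ∨ (lt y₂ y₃ ∧ lt y₃ y₁) ∨ (lt y₃ y₁ ∧ lt y₁ y₂) := by
  rcases hB with ⟨h1, h2⟩ | ⟨h1, h2⟩ | ⟨h1, h2⟩
  · exact sortedB hsto hinv hzc hzpos hx11 hx12 hx21 hx22 hx31 hx32
      hy11 hy12 hy21 hy22 hy31 hy32 hs1 hs2 hs3 h1 h2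
  · have := sortedB hsto hinv hzc hzpos hx21 hx22 hx31 hx32 hx11 hx12
      hy21 hy22 hy31 hy32 hy11 hy12 hs2 hs3 hs1 h1 h2
    tauto
  · have := sortedB hsto hinv hzc hzpos hx31 hx32 hx11 hx12 hx21 hx22
      hy31 hy32 hy11 hy12 hy21 hy22 hs3 hs1 hs2 h1 h2
    tauto

theorem Bexcl (hsto : IsStrictTotalOrder G lt) {p q r : G}
    (h1 : (lt p q ∧ lt q r) ∨ (lt q r ∧ lt r p) ∨ (lt r p ∧ lt p q))
    (h2 : (lt p r ∧ lt r q) ∨ (lt r q ∧ lt q p) ∨ (lt q p ∧ lt p r)) : False := by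
  rcases h1 with ⟨ha, hb⟩ | ⟨ha, hb⟩ | ⟨ha, hb⟩ <;>
    rcases h2 with ⟨hc, hd⟩ | ⟨hc, hd⟩ | ⟨hc, hd⟩ <;>
      first
        | exact lasym hsto ha hc | exact lasym hsto ha hd
        | exact lasym hsto hb hc | exact lasym hsto hb hd

theorem Btot (hsto : IsStrictTotalOrder G lt) {p q r : G}
    (hpq : p ≠ q) (hqr : q ≠ r) (hpr : p ≠ r) :
    ((lt p q ∧ lt q r) ∨ (lt q r ∧ lt r p) ∨ (lt r p ∧ lt p q)) ∨
    ((lt p r ∧ lt r q) ∨ (lt r q ∧ lt q p) ∨ (lt q p ∧ lt p r)) := by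
  rcases (Std.Trichotomous.rel_or_eq_or_rel_swap (i := hsto.toTrichotomous) (a := p) (b := q)) with h1 | h1 | h1 <;>
    rcases (Std.Trichotomous.rel_or_eq_or_rel_swap (i := hsto.toTrichotomous) (a := q) (b := r)) with h2 | h2 | h2 <;>
      rcases (Std.Trichotomous.rel_or_eq_or_rel_swap (i := hsto.toTrichotomous) (a := p) (b := r)) with h3 | h3 | h3 <;> tauto

end Stmt10Aux

open Stmt10Aux

/-- `c_{<^g} = (c_<)^{g⟨z⟩}` : the circular ordering on `G/⟨z⟩` induced by the conjugate
ordering `<^g` equals the conjugate by `g⟨z⟩` of the one induced by `<`.  Here `m` is the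
minimal-representative function for `<` and `m'` the one for `<^g`. -/
theorem stmt10 {G : Type*} [Group G] (lt : G → G → Prop)
    (hsto : IsStrictTotalOrder G lt)
    (hinv : ∀ f a b : G, lt a b → lt (f * a) (f * b))
    (z : G) (hzc : ∀ x : G, z * x = x * z) (hzpos : lt 1 z)
    (hcof : ∀ x : G, ∃ k : ℤ, lt (z ^ (-k)) x ∧ lt x (z ^ k))
    (g : G)
    (m m' : G → G)
    (hm : ∀ a : G, (∃ k : ℤ, m a = a * z ^ k) ∧ ¬lt (m a) 1 ∧ lt (m a) z)
    (hmc : ∀ a b : G, (∃ k : ℤ, b = a * z ^ k) → m a = m b)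
    (hm' : ∀ a : G, (∃ k : ℤ, m' a = a * z ^ k) ∧ ¬lt (m' a * g) (1 * g) ∧
        lt (m' a * g) (z * g))
    (hmc' : ∀ a b : G, (∃ k : ℤ, b = a * z ^ k) → m' a = m' b) :
    ∀ a₁ a₂ a₃ : G,
      (if (¬∃ k : ℤ, a₂ = a₁ * z ^ k) ∧ (¬∃ k : ℤ, a₃ = a₂ * z ^ k) ∧
          (¬∃ k : ℤ, a₃ = a₁ * z ^ k) then
        (if (lt (m' a₁ * g) (m' a₂ * g) ∧ lt (m' a₂ * g) (m' a₃ * g)) ∨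
            (lt (m' a₂ * g) (m' a₃ * g) ∧ lt (m' a₃ * g) (m' a₁ * g)) ∨
            (lt (m' a₃ * g) (m' a₁ * g) ∧ lt (m' a₁ * g) (m' a₂ * g)) then (1 : ℤ) else -1)
       else 0) =
      (if (¬∃ k : ℤ, a₂ * g = a₁ * g * z ^ k) ∧ (¬∃ k : ℤ, a₃ * g = a₂ * g * z ^ k) ∧
          (¬∃ k : ℤ, a₃ * g = a₁ * g * z ^ k) then
        (if (lt (m (a₁ * g)) (m (a₂ * g)) ∧ lt (m (a₂ * g)) (m (a₃ * g))) ∨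
            (lt (m (a₂ * g)) (m (a₃ * g)) ∧ lt (m (a₃ * g)) (m (a₁ * g))) ∨
            (lt (m (a₃ * g)) (m (a₁ * g)) ∧ lt (m (a₁ * g)) (m (a₂ * g))) then (1 : ℤ) else -1)
       else 0) := by
  intro a₁ a₂ a₃
  have hcos : ∀ b c : G, (∃ k : ℤ, c * g = b * g * z ^ k) ↔ (∃ k : ℤ, c = b * z ^ k) := by
    intro b c
    have key : ∀ k : ℤ, b * g * z ^ k = b * z ^ k * g := by
      intro k
      rw [mul_assoc b g, zcomm hzc k g, ← mul_assoc, mul_assoc b (z ^ k) g]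
    constructor
    · rintro ⟨k, hk⟩
      rw [key k] at hk
      exact ⟨k, mul_right_cancel hk⟩
    · rintro ⟨k, hk⟩
      exact ⟨k, by rw [hk, key k]⟩
  have hcond : ((¬∃ k : ℤ, a₂ * g = a₁ * g * z ^ k) ∧ (¬∃ k : ℤ, a₃ * g = a₂ * g * z ^ k) ∧
      (¬∃ k : ℤ, a₃ * g = a₁ * g * z ^ k)) ↔
      ((¬∃ k : ℤ, a₂ = a₁ * z ^ k) ∧ (¬∃ k : ℤ, a₃ = a₂ * z ^ k) ∧
      (¬∃ k : ℤ, a₃ = a₁ * z ^ k)) := by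
    simp only [hcos]
  by_cases hC : (¬∃ k : ℤ, a₂ = a₁ * z ^ k) ∧ (¬∃ k : ℤ, a₃ = a₂ * z ^ k) ∧
      (¬∃ k : ℤ, a₃ = a₁ * z ^ k)
  · rw [if_pos hC, if_pos (hcond.mpr hC)]
    obtain ⟨⟨p₁, hp₁⟩, hx11, hx12⟩ := hm' a₁
    obtain ⟨⟨p₂, hp₂⟩, hx21, hx22⟩ := hm' a₂
    obtain ⟨⟨p₃, hp₃⟩, hx31, hx32⟩ := hm' a₃
    obtain ⟨⟨q₁, hq₁⟩, hy11, hy12⟩ := hm (a₁ * g)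
    obtain ⟨⟨q₂, hq₂⟩, hy21, hy22⟩ := hm (a₂ * g)
    obtain ⟨⟨q₃, hq₃⟩, hy31, hy32⟩ := hm (a₃ * g)
    rw [one_mul] at hx11 hx21 hx31
    rw [show z = z * 1 from (mul_one z).symm] at hy12 hy22 hy32
    -- shifts
    have hmove : ∀ (a : G) (i j : ℤ), (a * z ^ i * g) * z ^ j = (a * g) * z ^ (i + j) := by
      intro a i j
      rw [mul_assoc a (z ^ i) g, ← zcomm hzc i g, ← mul_assoc a g, zjoin]
    have hsh1 : m (a₁ * g) = (m' a₁ * g) * z ^ (q₁ - p₁) := by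
      rw [hq₁, hp₁, hmove, show p₁ + (q₁ - p₁) = q₁ from by omega]
    have hsh2 : m (a₂ * g) = (m' a₂ * g) * z ^ (q₂ - p₂) := by
      rw [hq₂, hp₂, hmove, show p₂ + (q₂ - p₂) = q₂ from by omega]
    have hsh3 : m (a₃ * g) = (m' a₃ * g) * z ^ (q₃ - p₃) := by
      rw [hq₃, hp₃, hmove, show p₃ + (q₃ - p₃) = q₃ from by omega]
    -- distinctness of the x's
    have hdist : ∀ (b c : G) (i j : ℤ), m' b = b * z ^ i → m' c = c * z ^ j →
        m' b * g = m' c * g → ∃ k : ℤ, c = b * z ^ k := by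
      intro b c i j hb hc h
      have h2 : b * z ^ i = c * z ^ j := by rw [← hb, ← hc, mul_right_cancel h]
      refine ⟨i - j, ?_⟩
      have h4 : c = (c * z ^ j) * z ^ (-j) := by
        rw [zjoin, show j + -j = (0 : ℤ) from by omega, zpow_zero, mul_one]
      rw [h4, ← h2, zjoin, show i + -j = i - j from by omega]
    have hne12 : m' a₁ * g ≠ m' a₂ * g := fun h => hC.1 (hdist a₁ a₂ p₁ p₂ hp₁ hp₂ h)
    have hne23 : m' a₂ * g ≠ m' a₃ * g := fun h => hC.2.1 (hdist a₂ a₃ p₂ p₃ hp₂ hp₃ h)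
    have hne13 : m' a₁ * g ≠ m' a₃ * g := fun h => hC.2.2 (hdist a₁ a₃ p₁ p₃ hp₁ hp₃ h)
    have hBiff :
        ((lt (m' a₁ * g) (m' a₂ * g) ∧ lt (m' a₂ * g) (m' a₃ * g)) ∨
          (lt (m' a₂ * g) (m' a₃ * g) ∧ lt (m' a₃ * g) (m' a₁ * g)) ∨
          (lt (m' a₃ * g) (m' a₁ * g) ∧ lt (m' a₁ * g) (m' a₂ * g))) ↔
        ((lt (m (a₁ * g)) (m (a₂ * g)) ∧ lt (m (a₂ * g)) (m (a₃ * g))) ∨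
          (lt (m (a₂ * g)) (m (a₃ * g)) ∧ lt (m (a₃ * g)) (m (a₁ * g))) ∨
          (lt (m (a₃ * g)) (m (a₁ * g)) ∧ lt (m (a₁ * g)) (m (a₂ * g)))) := by
      constructor
      · exact fun h => Bimp hsto hinv hzc hzpos hx11 hx12 hx21 hx22 hx31 hx32
          hy11 hy12 hy21 hy22 hy31 hy32 hsh1 hsh2 hsh3 h
      · intro h
        by_contra hnB
        rcases Btot hsto hne12 hne23 hne13 with hB | hB
        · exact hnB hB
        · exact Bexcl hsto h (Bimp hsto hinv hzc hzpos hx11 hx12 hx31 hx32 hx21 hx22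
            hy11 hy12 hy31 hy32 hy21 hy22 hsh1 hsh3 hsh2 hB)
    exact if_congr hBiff rfl rfl
  · rw [if_neg hC, if_neg (fun h => hC (hcond.mp h))]
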